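/- For all integers L ≥ 0 and K ≥ 0, the integer N = M_L·(10^{L+4+K} + 1), where M_L = 11·(10^{L+2} − 1), whose decimal digit string is the symmetric concatenation 10(9)_L89 (0)_K 10(9)_L89 (two copies of the motif 10(9)_L89 separated by K zeros), satisfies rev(N) = 9·N; consequently N and 10·N form a 2-cycle of the iterative digital reversal map. -/

import Mathlib

/-- Digital reversal of a natural number (in base 10). -/
def rev (D : ℕ) : ℕ := Nat.ofDigits 10 ((Nat.digits 10 D).reverse)

/-- The iterative digital reversal map: `D ↦ D - rev D` if `rev D < D`,
and `D ↦ D + rev D` if `rev D ≥ D`. -/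
def IDR (D : ℕ) : ℕ := if rev D < D then D - rev D else D + rev D

lemma orep9 (n : ℕ) : Nat.ofDigits 10 (List.replicate n 9) = 10 ^ n - 1 := by
  induction n with
  | zero => simp
  | succ n ih =>
    rw [List.replicate_succ, Nat.ofDigits_cons, ih, pow_succ]
    have : 0 < 10 ^ n := by positivity
    omega

lemma orep0 (n : ℕ) : Nat.ofDigits 10 (List.replicate n 0) = 0 := by
  induction n with
  | zero => simp
  | succ n ih => rw [List.replicate_succ, Nat.ofDigits_cons, ih]

/-- The little-endian digit list of `N`. -/
def dl (L K : ℕ) : List ℕ :=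
  [9,8] ++ List.replicate L 9 ++ [0,1] ++ List.replicate K 0 ++ [9,8] ++ List.replicate L 9 ++ [0,1]

lemma dl_val (L K : ℕ) :
    Nat.ofDigits 10 (dl L K) = 11 * (10 ^ (L + 2) - 1) * (10 ^ (L + 4 + K) + 1) := by
  have hL' : 1 ≤ 10 ^ L := Nat.one_le_pow L 10 (by norm_num)
  have hP : 1 ≤ 10 ^ (L + 2) := Nat.one_le_pow _ 10 (by norm_num)
  simp only [dl, Nat.ofDigits_append, Nat.ofDigits_cons, Nat.ofDigits_nil, orep9, orep0,
    List.length_append, List.length_replicate, List.length_cons, List.length_nil]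
  zify [hL', hP]
  push_cast [pow_add]
  ring

lemma dl_rev_val (L K : ℕ) :
    Nat.ofDigits 10 ((dl L K).reverse) =
      9 * (11 * (10 ^ (L + 2) - 1) * (10 ^ (L + 4 + K) + 1)) := by
  have hL' : 1 ≤ 10 ^ L := Nat.one_le_pow L 10 (by norm_num)
  have hP : 1 ≤ 10 ^ (L + 2) := Nat.one_le_pow _ 10 (by norm_num)
  simp only [dl, List.reverse_append, List.reverse_cons, List.reverse_nil, List.nil_append,
    List.reverse_replicate, List.append_assoc, List.cons_append, List.singleton_append,
    Nat.ofDigits_append, Nat.ofDigits_cons, Nat.ofDigits_nil, orep9, orep0,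
    List.length_append, List.length_replicate, List.length_cons, List.length_nil]
  zify [hL', hP]
  push_cast [pow_add]
  ring

lemma digits_eq (L K : ℕ) :
    Nat.digits 10 (11 * (10 ^ (L + 2) - 1) * (10 ^ (L + 4 + K) + 1)) = dl L K := by
  rw [← dl_val]
  apply Nat.digits_ofDigits 10 (by norm_num)
  · intro l hl
    simp [dl, List.mem_append, List.mem_replicate] at hl
    omega
  · intro h
    simp [dl, List.getLast_append]

theorem stmt12 (L K : ℕ) :
    rev (11 * (10 ^ (L + 2) - 1) * (10 ^ (L + 4 + K) + 1)) =
      9 * (11 * (10 ^ (L + 2) - 1) * (10 ^ (L + 4 + K) + 1)) ∧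
    IDR (11 * (10 ^ (L + 2) - 1) * (10 ^ (L + 4 + K) + 1)) =
      10 * (11 * (10 ^ (L + 2) - 1) * (10 ^ (L + 4 + K) + 1)) ∧
    IDR (10 * (11 * (10 ^ (L + 2) - 1) * (10 ^ (L + 4 + K) + 1))) =
      11 * (10 ^ (L + 2) - 1) * (10 ^ (L + 4 + K) + 1) := by
  set N := 11 * (10 ^ (L + 2) - 1) * (10 ^ (L + 4 + K) + 1) with hN
  have h100 : 100 ≤ 10 ^ (L + 2) := by
    calc (100 : ℕ) = 10 ^ 2 := by norm_num
    _ ≤ 10 ^ (L + 2) := Nat.pow_le_pow_right (by norm_num) (by omega)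
  have hNpos : 0 < N := by
    apply Nat.mul_pos (Nat.mul_pos (by norm_num) (by omega))
    positivity
  have h9 : rev N = 9 * N := by
    unfold rev
    rw [hN, digits_eq, dl_rev_val]
  have hrev10 : rev (10 * N) = 9 * N := by
    unfold rev
    rw [Nat.digits_def' (by norm_num : (1:ℕ) < 10) (by positivity),
      Nat.mul_mod_right, Nat.mul_div_cancel_left _ (by norm_num : 0 < 10)]
    rw [List.reverse_cons, Nat.ofDigits_append]
    simpa [rev] using h9
  refine ⟨h9, ?_, ?_⟩
  · unfold IDR
    rw [h9, if_neg (by omega)]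
    omega
  · unfold IDR
    rw [hrev10, if_pos (by omega)]
    omega
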